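/- arXiv:2303.02714 — 9 statements merged into one kernel-verified Lean document; each statement's English description precedes it below -/
import Mathlib

section
/- For all valid labelings X and Y, the transition matrix M of the distributed Metropolis chain satisfies the detailed balance equation π(X)·M[X,Y] = π(Y)·M[Y,X]. -/
open scoped Classical
open Finset

noncomputable section

namespace DistSampling

variable {V L : Type*} [Fintype V] [Fintype L] [DecidableEq V] [DecidableEq L]
  [Nonempty V] [Nonempty L]

/-- `Sw b v` is the normalizing constant `S_v = Σ_{l ∈ L} b_v(l)`. -/
def Sw (b : V → L → ℝ) (v : V) : ℝ := ∑ l, b v l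

/-- `Cstar C R` is the maximum value `C*_R` of the constraint `C_R` over all labelings. -/
def Cstar (C : Finset V → (V → L) → ℝ) (R : Finset V) : ℝ :=
  Finset.univ.sup' Finset.univ_nonempty (fun X : V → L => C R X)

/-- The weight `w(X)` of a labeling `X`. -/
def weight (b : V → L → ℝ) (𝒮 : Finset (Finset V)) (C : Finset V → (V → L) → ℝ)
    (X : V → L) : ℝ :=
  (∏ v, b v (X v)) * ∏ R ∈ 𝒮, C R X

/-- A vertex is restricted under the filter outcome `I` if it belongs to a
constraint set that fails its filter. -/
def Restricted (𝒮 : Finset (Finset V)) (I : {R // R ∈ 𝒮} → Bool) (v : V) : Prop :=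
  ∃ R : {R // R ∈ 𝒮}, v ∈ R.val ∧ I R = false

/-- The move `(σ, I)` maps the labeling `X` to the labeling `Y`:
active unrestricted vertices adopt their proposal, everyone else keeps their label. -/
def MoveMapsTo (𝒮 : Finset (Finset V)) (σ : V → Option L) (I : {R // R ∈ 𝒮} → Bool)
    (X Y : V → L) : Prop :=
  ∀ v, Y v = if Restricted 𝒮 I v then X v else (σ v).getD (X v)

/-- A choice vector for constraint set `R`: each vertex of `R` chooses 'cur'
(`false`) or, if active, 'prop' (`true`), with at least one 'prop'; vertices
outside `R` make no choice. -/
def IsChoice (σ : V → Option L) (R : Finset V) (c : V → Bool) : Prop :=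
  (∀ v, c v = true → v ∈ R ∧ (σ v).isSome) ∧ (∃ v ∈ R, c v = true)

/-- The potential labeling `ℓ_c` determined by a choice vector `c`. -/
def potential (σ : V → Option L) (X : V → L) (c : V → Bool) : V → L :=
  fun v => if c v then (σ v).getD (X v) else X v

/-- `q_R(σ, X)`: the probability that constraint set `R` passes the local filter. -/
def q (C : Finset V → (V → L) → ℝ) (σ : V → Option L) (X : V → L) (R : Finset V) : ℝ :=
  ∏ c ∈ Finset.univ.filter (fun c : V → Bool => IsChoice σ R c),
    C R (potential σ X c) / Cstar C R

/-- `P(σ)`: the probability of the marking/proposal outcome `σ`. -/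
def Pprop (b : V → L → ℝ) (p : ℝ) (σ : V → Option L) : ℝ :=
  ∏ v, (σ v).elim (1 - p) (fun l => p * b v l / Sw b v)

/-- `P(I | σ, X)`: the probability of the filter outcome `I` given proposal `σ`
and current labeling `X`. -/
def Pfilter (C : Finset V → (V → L) → ℝ) (𝒮 : Finset (Finset V))
    (σ : V → Option L) (X : V → L) (I : {R // R ∈ 𝒮} → Bool) : ℝ :=
  ∏ R : {R // R ∈ 𝒮}, (if I R then q C σ X R.val else 1 - q C σ X R.val)

/-- The transition matrix `M` of the distributed Metropolis chain. -/
def M (b : V → L → ℝ) (p : ℝ) (𝒮 : Finset (Finset V))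
    (C : Finset V → (V → L) → ℝ) : Matrix (V → L) (V → L) ℝ :=
  fun X Y => ∑ σ : V → Option L, ∑ I : {R // R ∈ 𝒮} → Bool,
    if MoveMapsTo 𝒮 σ I X Y then Pprop b p σ * Pfilter C 𝒮 σ X I else 0

/-- `π(X)`: the probability of labeling `X`, proportional to its weight. -/
def pie (b : V → L → ℝ) (𝒮 : Finset (Finset V)) (C : Finset V → (V → L) → ℝ)
    (X : V → L) : ℝ :=
  weight b 𝒮 C X / ∑ Z : V → L, weight b 𝒮 C Z

/-- The modified proposal `σ'` associated with a move taking `X` to `Y`. -/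
def sigma' (X Y : V → L) (σ : V → Option L) : V → Option L :=
  fun v => if X v ≠ Y v then some (X v) else σ v


section Aux

variable {𝒮 : Finset (Finset V)} {C : Finset V → (V → L) → ℝ}
  {σ : V → Option L} {I : {R // R ∈ 𝒮} → Bool} {X Y : V → L}

lemma sigma_eq_of_ne (h : MoveMapsTo 𝒮 σ I X Y) {v : V} (hv : X v ≠ Y v) :
    σ v = some (Y v) ∧ ¬ Restricted 𝒮 I v := by
  have h1 := h v
  by_cases hr : Restricted 𝒮 I v
  · rw [if_pos hr] at h1
    exact absurd h1.symm hv
  · rw [if_neg hr] at h1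
    refine ⟨?_, hr⟩
    cases hσ : σ v with
    | none => rw [hσ] at h1; exact absurd h1.symm hv
    | some l => rw [hσ] at h1; simp only [Option.getD_some] at h1; rw [h1]

lemma move_symm (h : MoveMapsTo 𝒮 σ I X Y) : MoveMapsTo 𝒮 (sigma' X Y σ) I Y X := by
  intro v
  have h1 := h v
  by_cases hr : Restricted 𝒮 I v
  · rw [if_pos hr] at h1
    rw [if_pos hr, h1]
  · rw [if_neg hr] at h1
    rw [if_neg hr]
    by_cases hv : X v = Y v
    · have hs : sigma' X Y σ v = σ v := by simp [sigma', hv]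
      rw [hs, ← hv]
      exact hv.trans h1
    · simp [sigma', hv]

lemma sigma'_invol (h : MoveMapsTo 𝒮 σ I X Y) : sigma' Y X (sigma' X Y σ) = σ := by
  funext v
  by_cases hv : X v = Y v
  · have hv' : ¬ (Y v ≠ X v) := by simp [hv]
    simp only [sigma', hv, ne_eq, not_true_eq_false]
    simp [hv, hv']
  · have hv' : (Y v ≠ X v) := fun hc => hv hc.symm
    have hs := (sigma_eq_of_ne h hv).1
    simp only [sigma', ne_eq, hv, not_false_eq_true, if_pos, if_true, hv', hs]

lemma sigma'_isSome (h : MoveMapsTo 𝒮 σ I X Y) (v : V) :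
    (sigma' X Y σ v).isSome = (σ v).isSome := by
  by_cases hv : X v = Y v
  · simp [sigma', hv]
  · rw [(sigma_eq_of_ne h hv).1]
    simp [sigma', hv]

lemma D_split (σ : V → Option L) (R : Finset V) :
    (Finset.univ.filter (fun c : V → Bool => ∀ v, c v = true → v ∈ R ∧ (σ v).isSome))
      = insert (fun _ => false)
          (Finset.univ.filter (fun c : V → Bool => IsChoice σ R c)) := by
  ext c
  simp only [mem_insert, mem_filter, mem_univ, true_and]
  constructor
  · intro hc
    by_cases hex : ∃ v ∈ R, c v = true
    · exact Or.inr ⟨hc, hex⟩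
    · left
      funext v
      by_cases hcv : c v = true
      · exact absurd ⟨v, (hc v hcv).1, hcv⟩ hex
      · simp only [Bool.not_eq_true] at hcv; rw [hcv]
  · rintro (rfl | ⟨h1, _⟩)
    · intro v hv; simp at hv
    · exact h1

lemma c0_not_choice (σ : V → Option L) (R : Finset V) :
    (fun _ : V => false) ∉ Finset.univ.filter (fun c : V → Bool => IsChoice σ R c) := by
  rw [Finset.mem_filter]
  simp [IsChoice]

lemma q_eq_of_agree {σ' : V → Option L} {R : Finset V}
    (hXY : ∀ v ∈ R, X v = Y v) (hσ : ∀ v ∈ R, σ' v = σ v)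
    (hCloc : ∀ Z W : V → L, (∀ v ∈ R, Z v = W v) → C R Z = C R W) :
    q C σ X R = q C σ' Y R := by
  unfold q
  rw [Finset.filter_congr (q := fun c : V → Bool => IsChoice σ' R c)
    (by
      intro c _
      simp only [IsChoice]
      constructor
      · rintro ⟨h1, h2⟩
        exact ⟨fun v hv => ⟨(h1 v hv).1, by rw [hσ v (h1 v hv).1]; exact (h1 v hv).2⟩, h2⟩
      · rintro ⟨h1, h2⟩
        exact ⟨fun v hv => ⟨(h1 v hv).1, by rw [← hσ v (h1 v hv).1]; exact (h1 v hv).2⟩, h2⟩)]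
  refine Finset.prod_congr rfl ?_
  intro c hc
  rw [Finset.mem_filter] at hc
  congr 1
  apply hCloc
  intro v hv
  simp only [potential]
  by_cases hcv : c v = true
  · rw [hcv, if_pos rfl, if_pos rfl, hσ v hv, hXY v hv]
  · simp only [Bool.not_eq_true] at hcv
    rw [hcv]
    simp [hXY v hv]

lemma q_key (h : MoveMapsTo 𝒮 σ I X Y) {R : Finset V}
    (hCloc : ∀ Z W : V → L, (∀ v ∈ R, Z v = W v) → C R Z = C R W)
    (hCs : Cstar C R ≠ 0) :
    C R X * q C σ X R = C R Y * q C (sigma' X Y σ) Y R := by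
  set σ' := sigma' X Y σ with hσ'def
  have hsome : ∀ v, (σ' v).isSome = (σ v).isSome := sigma'_isSome h
  set c₀ : V → Bool := fun _ => false with hc₀def
  have hc₀X : potential σ X c₀ = X := by funext v; simp [potential, hc₀def]
  have hc₀Y : potential σ' Y c₀ = Y := by funext v; simp [potential, hc₀def]
  set D := Finset.univ.filter
    (fun c : V → Bool => ∀ v, c v = true → v ∈ R ∧ (σ v).isSome) with hDdef
  have hD : D = insert c₀ (Finset.univ.filter (fun c : V → Bool => IsChoice σ R c)) :=
    D_split σ R
  have hD' : D = insert c₀ (Finset.univ.filter (fun c : V → Bool => IsChoice σ' R c)) := by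
    rw [hDdef, Finset.filter_congr (q := fun c : V → Bool =>
        ∀ v, c v = true → v ∈ R ∧ (σ' v).isSome)
      (by intro c _; simp only [hsome])]
    exact D_split σ' R
  have h1 : ∏ c ∈ D, C R (potential σ X c) / Cstar C R
      = (C R X / Cstar C R) * q C σ X R := by
    rw [hD, Finset.prod_insert (c0_not_choice σ R), hc₀X]; rfl
  have h2 : ∏ c ∈ D, C R (potential σ' Y c) / Cstar C R
      = (C R Y / Cstar C R) * q C σ' Y R := by
    rw [hD', Finset.prod_insert (c0_not_choice σ' R), hc₀Y]; rfl
  -- the flip bijection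
  set F : (V → Bool) → (V → Bool) := fun c v => if v ∈ R ∧ X v ≠ Y v then ! (c v) else c v
    with hFdef
  have hFF : ∀ c, F (F c) = c := by
    intro c; funext v
    by_cases hv : v ∈ R ∧ X v ≠ Y v <;> simp [hFdef, hv]
  have hFmem : ∀ c ∈ D, F c ∈ D := by
    intro c hc
    rw [hDdef, Finset.mem_filter] at hc ⊢
    refine ⟨Finset.mem_univ _, ?_⟩
    intro v hv
    by_cases hvc : v ∈ R ∧ X v ≠ Y v
    · exact ⟨hvc.1, by rw [(sigma_eq_of_ne h hvc.2).1]; rfl⟩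
    · apply hc.2
      simpa [hFdef, hvc] using hv
  have hFval : ∀ c ∈ D, C R (potential σ X c) / Cstar C R
      = C R (potential σ' Y (F c)) / Cstar C R := by
    intro c hc
    congr 1
    apply hCloc
    intro v hv
    by_cases hveq : X v = Y v
    · have hF : F c v = c v := by simp [hFdef, hveq]
      simp only [potential, hF]
      by_cases hcv : c v = true
      · rw [hcv, if_pos rfl, if_pos rfl]
        have : σ' v = σ v := by simp [hσ'def, sigma', hveq]
        rw [this, hveq]
      · simp only [Bool.not_eq_true] at hcv; rw [hcv]; simp [hveq]
    · have hσv : σ v = some (Y v) := (sigma_eq_of_ne h hveq).1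
      have hσ'v : σ' v = some (X v) := by simp [hσ'def, sigma', hveq]
      have hF : F c v = ! (c v) := by simp [hFdef, hv, hveq]
      simp only [potential, hF]
      by_cases hcv : c v = true
      · rw [hcv]; simp [hσv]
      · simp only [Bool.not_eq_true] at hcv; rw [hcv]; simp [hσ'v]
  have hmain : ∏ c ∈ D, C R (potential σ X c) / Cstar C R
      = ∏ c ∈ D, C R (potential σ' Y c) / Cstar C R :=
    Finset.prod_nbij' F F hFmem hFmem (fun a _ => hFF a) (fun a _ => hFF a) hFval
  rw [h1, h2] at hmain
  rw [div_mul_eq_mul_div, div_mul_eq_mul_div] at hmain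
  calc C R X * q C σ X R
      = C R X * q C σ X R / Cstar C R * Cstar C R := by field_simp
    _ = C R Y * q C σ' Y R / Cstar C R * Cstar C R := by rw [hmain]
    _ = C R Y * q C σ' Y R := by field_simp

lemma pprop_balance {b : V → L → ℝ} {p : ℝ} (h : MoveMapsTo 𝒮 σ I X Y) :
    (∏ v, b v (X v)) * Pprop b p σ
      = (∏ v, b v (Y v)) * Pprop b p (sigma' X Y σ) := by
  unfold Pprop
  rw [← Finset.prod_mul_distrib, ← Finset.prod_mul_distrib]
  refine Finset.prod_congr rfl ?_
  intro v _
  by_cases hv : X v = Y v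
  · simp [sigma', hv]
  · have hs := (sigma_eq_of_ne h hv).1
    have hs' : sigma' X Y σ v = some (X v) := by simp [sigma', hv]
    rw [hs, hs']
    simp only [Option.elim_some]
    ring

lemma pfilter_balance (h : MoveMapsTo 𝒮 σ I X Y)
    (hCloc : ∀ R ∈ 𝒮, ∀ Z W : V → L, (∀ v ∈ R, Z v = W v) → C R Z = C R W)
    (hCstar : ∀ R ∈ 𝒮, 0 < Cstar C R) :
    (∏ R ∈ 𝒮, C R X) * Pfilter C 𝒮 σ X I
      = (∏ R ∈ 𝒮, C R Y) * Pfilter C 𝒮 (sigma' X Y σ) Y I := by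
  unfold Pfilter
  rw [Finset.prod_subtype 𝒮 (fun _ => Iff.rfl) (fun R => C R X),
      Finset.prod_subtype 𝒮 (fun _ => Iff.rfl) (fun R => C R Y),
      ← Finset.prod_mul_distrib, ← Finset.prod_mul_distrib]
  refine Finset.prod_congr rfl ?_
  intro R _
  by_cases hI : I R = true
  · rw [if_pos hI, if_pos hI]
    exact q_key h (hCloc R.val R.prop) (ne_of_gt (hCstar R.val R.prop))
  · rw [if_neg hI, if_neg hI]
    have hXY : ∀ v ∈ R.val, X v = Y v := by
      intro v hv
      have hr : Restricted 𝒮 I v := ⟨R, hv, by simpa using hI⟩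
      have := h v
      rw [if_pos hr] at this
      exact this.symm
    have hσ : ∀ v ∈ R.val, sigma' X Y σ v = σ v := by
      intro v hv
      simp [sigma', hXY v hv]
    rw [hCloc R.val R.prop X Y hXY, q_eq_of_agree hXY hσ (hCloc R.val R.prop)]

lemma move_balance {b : V → L → ℝ} {p : ℝ} (h : MoveMapsTo 𝒮 σ I X Y)
    (hCloc : ∀ R ∈ 𝒮, ∀ Z W : V → L, (∀ v ∈ R, Z v = W v) → C R Z = C R W)
    (hCstar : ∀ R ∈ 𝒮, 0 < Cstar C R) :
    weight b 𝒮 C X * (Pprop b p σ * Pfilter C 𝒮 σ X I)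
      = weight b 𝒮 C Y
          * (Pprop b p (sigma' X Y σ) * Pfilter C 𝒮 (sigma' X Y σ) Y I) := by
  have e : ∀ (Z : V → L) (τ : V → Option L),
      weight b 𝒮 C Z * (Pprop b p τ * Pfilter C 𝒮 τ Z I)
        = ((∏ v, b v (Z v)) * Pprop b p τ)
            * ((∏ R ∈ 𝒮, C R Z) * Pfilter C 𝒮 τ Z I) := by
    intro Z τ; unfold weight; ring
  rw [e, e, pprop_balance h, pfilter_balance h hCloc hCstar]

end Aux

/-- detailed balance for the distributed Metropolis chain. -/
theorem detailed_balance
(b : V → L → ℝ) (p : ℝ) (𝒮 : Finset (Finset V)) (C : Finset V → (V → L) → ℝ)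
    (hb : ∀ v l, 0 ≤ b v l) (hS : ∀ v, 0 < Sw b v)
    (hcard : ∀ R ∈ 𝒮, 2 ≤ R.card)
    (hC0 : ∀ R ∈ 𝒮, ∀ X : V → L, 0 ≤ C R X)
    (hCloc : ∀ R ∈ 𝒮, ∀ X Y : V → L, (∀ v ∈ R, X v = Y v) → C R X = C R Y)
    (hCstar : ∀ R ∈ 𝒮, 0 < Cstar C R)
    (hp : 0 < p) (hp1 : p < 1)
    (hvalid : ∃ Z : V → L, 0 < weight b 𝒮 C Z)
    (X Y : V → L) (hX : 0 < weight b 𝒮 C X) (hY : 0 < weight b 𝒮 C Y) :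
    pie b 𝒮 C X * M b p 𝒮 C X Y = pie b 𝒮 C Y * M b p 𝒮 C Y X := by
  have expand : ∀ (Z W : V → L), weight b 𝒮 C Z * M b p 𝒮 C Z W
      = ∑ z ∈ (Finset.univ.filter (fun z : (V → Option L) × ({R // R ∈ 𝒮} → Bool) =>
          MoveMapsTo 𝒮 z.1 z.2 Z W)),
        weight b 𝒮 C Z * (Pprop b p z.1 * Pfilter C 𝒮 z.1 Z z.2) := by
    intro Z W
    rw [Finset.sum_filter, Fintype.sum_prod_type]
    unfold M
    simp only [Finset.mul_sum, mul_ite, mul_zero]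
  have key : weight b 𝒮 C X * M b p 𝒮 C X Y = weight b 𝒮 C Y * M b p 𝒮 C Y X := by
    rw [expand X Y, expand Y X]
    refine Finset.sum_nbij' (fun z => (sigma' X Y z.1, z.2))
      (fun z => (sigma' Y X z.1, z.2)) ?_ ?_ ?_ ?_ ?_
    · intro z hz
      rw [Finset.mem_filter] at hz ⊢
      exact ⟨Finset.mem_univ _, move_symm hz.2⟩
    · intro z hz
      rw [Finset.mem_filter] at hz ⊢
      exact ⟨Finset.mem_univ _, move_symm hz.2⟩
    · intro z hz
      rw [Finset.mem_filter] at hz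
      exact Prod.ext (sigma'_invol hz.2) rfl
    · intro z hz
      rw [Finset.mem_filter] at hz
      exact Prod.ext (sigma'_invol hz.2) rfl
    · intro z hz
      rw [Finset.mem_filter] at hz
      exact move_balance hz.2 (fun R hR => hCloc R hR) hCstar
  unfold pie
  rw [div_mul_eq_mul_div, div_mul_eq_mul_div, key]

end DistSampling
end
end

section
/- For valid labelings X ≠ Y, the map (σ, I) ↦ (σ', I) is a well-defined bijection from the set of moves that map X to Y onto the set of moves that map Y to X. -/
open scoped Classical
open Finset

noncomputable section

namespace DistSampling

variable {V L : Type*} [Fintype V] [Fintype L] [DecidableEq V] [DecidableEq L]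
  [Nonempty V] [Nonempty L]

lemma moveMapsTo_of_ne {𝒮 : Finset (Finset V)} {σ : V → Option L}
    {I : {R // R ∈ 𝒮} → Bool} {X Y : V → L} (h : MoveMapsTo 𝒮 σ I X Y) {v : V}
    (hv : X v ≠ Y v) : ¬ Restricted 𝒮 I v ∧ σ v = some (Y v) := by
  have hvv := h v
  by_cases hr : Restricted 𝒮 I v
  · rw [if_pos hr] at hvv; exact absurd hvv.symm hv
  · rw [if_neg hr] at hvv
    refine ⟨hr, ?_⟩
    cases hσ : σ v with
    | none => rw [hσ] at hvv; exact absurd hvv.symm hv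
    | some l => rw [hσ] at hvv; simp at hvv; rw [hvv]

lemma sigma'_maps {𝒮 : Finset (Finset V)} {σ : V → Option L}
    {I : {R // R ∈ 𝒮} → Bool} {X Y : V → L} (h : MoveMapsTo 𝒮 σ I X Y) :
    MoveMapsTo 𝒮 (sigma' X Y σ) I Y X := by
  intro v
  by_cases hr : Restricted 𝒮 I v
  · rw [if_pos hr]
    have hvv := h v
    rw [if_pos hr] at hvv
    exact hvv.symm
  · rw [if_neg hr]
    by_cases hxy : X v = Y v
    · have hvv := h v
      rw [if_neg hr] at hvv
      unfold sigma'
      rw [if_neg (by simpa using hxy), ← hxy, ← hvv, hxy]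
    · unfold sigma'
      rw [if_pos (by simpa using hxy)]
      rfl

/-- (σ, I) ↦ (σ', I) is a well-defined bijection from the moves
mapping X to Y onto the moves mapping Y to X. -/
theorem move_bijection
(b : V → L → ℝ) (p : ℝ) (𝒮 : Finset (Finset V)) (C : Finset V → (V → L) → ℝ)
    (hb : ∀ v l, 0 ≤ b v l) (hS : ∀ v, 0 < Sw b v)
    (hcard : ∀ R ∈ 𝒮, 2 ≤ R.card)
    (hC0 : ∀ R ∈ 𝒮, ∀ X : V → L, 0 ≤ C R X)
    (hCloc : ∀ R ∈ 𝒮, ∀ X Y : V → L, (∀ v ∈ R, X v = Y v) → C R X = C R Y)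
    (hCstar : ∀ R ∈ 𝒮, 0 < Cstar C R)
    (hp : 0 < p) (hp1 : p < 1)
    (hvalid : ∃ Z : V → L, 0 < weight b 𝒮 C Z)
    (X Y : V → L) (hX : 0 < weight b 𝒮 C X) (hY : 0 < weight b 𝒮 C Y) (hXY : X ≠ Y) :
    Set.BijOn
      (fun m : (V → Option L) × ({R // R ∈ 𝒮} → Bool) => (sigma' X Y m.1, m.2))
      {m : (V → Option L) × ({R // R ∈ 𝒮} → Bool) | MoveMapsTo 𝒮 m.1 m.2 X Y}
      {m : (V → Option L) × ({R // R ∈ 𝒮} → Bool) | MoveMapsTo 𝒮 m.1 m.2 Y X} := by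
  refine ⟨fun m hm => sigma'_maps hm, ?_, ?_⟩
  · intro m₁ h₁ m₂ h₂ heq
    simp only [Prod.mk.injEq] at heq
    obtain ⟨hσ, hI⟩ := heq
    refine Prod.ext ?_ hI
    funext v
    by_cases hxy : X v = Y v
    · have e1 : sigma' X Y m₁.1 v = m₁.1 v := by
        unfold sigma'; rw [if_neg (by simpa using hxy)]
      have e2 : sigma' X Y m₂.1 v = m₂.1 v := by
        unfold sigma'; rw [if_neg (by simpa using hxy)]
      rw [← e1, ← e2, hσ]
    · rw [(moveMapsTo_of_ne h₁ hxy).2, (moveMapsTo_of_ne h₂ hxy).2]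
  · intro m hm
    set σ : V → Option L := fun v => if X v ≠ Y v then some (Y v) else m.1 v with hσdef
    refine ⟨(σ, m.2), ?_, ?_⟩
    · intro v
      by_cases hr : Restricted 𝒮 m.2 v
      · rw [if_pos hr]
        have hvv := hm v
        rw [if_pos hr] at hvv
        exact hvv.symm
      · rw [if_neg hr]
        by_cases hxy : X v = Y v
        · have hvv := hm v
          rw [if_neg hr] at hvv
          have hs : σ v = m.1 v := by
            simp only [hσdef]; rw [if_neg (by simpa using hxy)]
          show Y v = (σ v).getD (X v)
          rw [hs, hxy, ← hvv, hxy]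
        · have hs : σ v = some (Y v) := by
            simp only [hσdef]; rw [if_pos (by simpa using hxy)]
          show Y v = (σ v).getD (X v)
          rw [hs]; rfl
    · refine Prod.ext ?_ rfl
      simp only
      funext v
      by_cases hxy : X v = Y v
      · unfold sigma'
        rw [if_neg (by simpa using hxy)]
        simp only [hσdef]; rw [if_neg (by simpa using hxy)]
      · unfold sigma'
        rw [if_pos (by simpa using hxy)]
        exact ((moveMapsTo_of_ne hm fun h => hxy h.symm).2).symm

end DistSampling
end
end

section
/- For valid labelings X ≠ Y and any move (σ, I) that maps X to Y, with σ' the corresponding modified proposal, the proposal probabilities satisfy P(σ) · Π_{v∈V} b_v(X(v)) = P(σ') · Π_{v∈V} b_v(Y(v)). -/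
open scoped Classical
open Finset

noncomputable section

namespace DistSampling

variable {V L : Type*} [Fintype V] [Fintype L] [DecidableEq V] [DecidableEq L]
  [Nonempty V] [Nonempty L]

/-- the proposal probabilities satisfy
P(σ)·Π_v b_v(X(v)) = P(σ')·Π_v b_v(Y(v)). -/
theorem proposal_ratio
(b : V → L → ℝ) (p : ℝ) (𝒮 : Finset (Finset V)) (C : Finset V → (V → L) → ℝ)
    (hb : ∀ v l, 0 ≤ b v l) (hS : ∀ v, 0 < Sw b v)
    (hcard : ∀ R ∈ 𝒮, 2 ≤ R.card)
    (hC0 : ∀ R ∈ 𝒮, ∀ X : V → L, 0 ≤ C R X)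
    (hCloc : ∀ R ∈ 𝒮, ∀ X Y : V → L, (∀ v ∈ R, X v = Y v) → C R X = C R Y)
    (hCstar : ∀ R ∈ 𝒮, 0 < Cstar C R)
    (hp : 0 < p) (hp1 : p < 1)
    (hvalid : ∃ Z : V → L, 0 < weight b 𝒮 C Z)
    (X Y : V → L) (hX : 0 < weight b 𝒮 C X) (hY : 0 < weight b 𝒮 C Y) (hXY : X ≠ Y)
    (σ : V → Option L) (I : {R // R ∈ 𝒮} → Bool) (hmap : MoveMapsTo 𝒮 σ I X Y) :
    Pprop b p σ * ∏ v, b v (X v) = Pprop b p (sigma' X Y σ) * ∏ v, b v (Y v) := by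
  unfold Pprop
  rw [← Finset.prod_mul_distrib, ← Finset.prod_mul_distrib]
  refine Finset.prod_congr rfl fun v _ => ?_
  by_cases h : X v = Y v
  · simp [sigma', h]
  · have hm := hmap v
    have hne : Y v ≠ X v := fun e => h e.symm
    have hσ : σ v = some (Y v) := by
      by_cases hr : Restricted 𝒮 I v
      · simp [hr] at hm; exact absurd hm hne
      · simp [hr] at hm
        cases hσv : σ v with
        | none => rw [hσv] at hm; simp at hm; exact absurd hm hne
        | some l => rw [hσv] at hm; simp at hm; rw [hm]
    simp only [sigma', h, ne_eq, not_false_iff, if_true, hσ, Option.elim]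
    ring

end DistSampling
end
end

section
/- Let X ≠ Y be valid labelings, (σ, I) a move that maps X to Y, and σ' the corresponding modified proposal. Then for every constraint set R ∈ 𝒮: if I_R = 1 then q_R(σ, X) · C_R(X↾R) = q_R(σ', Y) · C_R(Y↾R), and if I_R = 0 then (1 − q_R(σ, X)) · C_R(X↾R) = (1 − q_R(σ', Y)) · C_R(Y↾R). -/
open scoped Classical
open Finset

noncomputable section

namespace DistSampling

variable {V L : Type*} [Fintype V] [Fintype L] [DecidableEq V] [DecidableEq L]
  [Nonempty V] [Nonempty L]

/-- for each constraint set R ∈ 𝒮, the local filter probabilities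
satisfy q_R(σ,X)·C_R(X↾R) = q_R(σ',Y)·C_R(Y↾R) when I_R = 1, and
(1−q_R(σ,X))·C_R(X↾R) = (1−q_R(σ',Y))·C_R(Y↾R) when I_R = 0. -/
theorem filter_ratio
(b : V → L → ℝ) (p : ℝ) (𝒮 : Finset (Finset V)) (C : Finset V → (V → L) → ℝ)
    (hb : ∀ v l, 0 ≤ b v l) (hS : ∀ v, 0 < Sw b v)
    (hcard : ∀ R ∈ 𝒮, 2 ≤ R.card)
    (hC0 : ∀ R ∈ 𝒮, ∀ X : V → L, 0 ≤ C R X)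
    (hCloc : ∀ R ∈ 𝒮, ∀ X Y : V → L, (∀ v ∈ R, X v = Y v) → C R X = C R Y)
    (hCstar : ∀ R ∈ 𝒮, 0 < Cstar C R)
    (hp : 0 < p) (hp1 : p < 1)
    (hvalid : ∃ Z : V → L, 0 < weight b 𝒮 C Z)
    (X Y : V → L) (hX : 0 < weight b 𝒮 C X) (hY : 0 < weight b 𝒮 C Y) (hXY : X ≠ Y)
    (σ : V → Option L) (I : {R // R ∈ 𝒮} → Bool) (hmap : MoveMapsTo 𝒮 σ I X Y)
    (R : Finset V) (hR : R ∈ 𝒮) :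
    (I ⟨R, hR⟩ = true →
      q C σ X R * C R X = q C (sigma' X Y σ) Y R * C R Y) ∧
    (I ⟨R, hR⟩ = false →
      (1 - q C σ X R) * C R X = (1 - q C (sigma' X Y σ) Y R) * C R Y) := by
  classical
  -- basic facts about vertices that change
  have hσY : ∀ v, X v ≠ Y v → ¬ Restricted 𝒮 I v ∧ σ v = some (Y v) := by
    intro v hv
    have h := hmap v
    by_cases hr : Restricted 𝒮 I v
    · rw [if_pos hr] at h; exact absurd h.symm hv
    · rw [if_neg hr] at h
      refine ⟨hr, ?_⟩
      cases hσv : σ v with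
      | none => rw [hσv] at h; exact absurd h.symm hv
      | some l => rw [hσv] at h; simp at h; rw [h]
  have hσ'1 : ∀ v, X v ≠ Y v → sigma' X Y σ v = some (X v) := by
    intro v hv; simp [sigma', hv]
  have hσ'2 : ∀ v, X v = Y v → sigma' X Y σ v = σ v := by
    intro v hv; simp [sigma', hv]
  -- case where X and Y agree on R
  have key_eq : (∀ v ∈ R, X v = Y v) →
      q C σ X R = q C (sigma' X Y σ) Y R ∧ C R X = C R Y := by
    intro hE
    have hCeq : C R X = C R Y := hCloc R hR X Y hE
    refine ⟨?_, hCeq⟩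
    unfold q
    refine Finset.prod_congr ?_ ?_
    · ext c
      simp only [Finset.mem_filter, Finset.mem_univ, true_and]
      unfold IsChoice
      constructor <;> rintro ⟨h1, h2⟩ <;> refine ⟨fun v hv => ?_, h2⟩
      · obtain ⟨hvR, hs⟩ := h1 v hv
        refine ⟨hvR, ?_⟩
        rw [hσ'2 v (hE v hvR)]; exact hs
      · obtain ⟨hvR, hs⟩ := h1 v hv
        refine ⟨hvR, ?_⟩
        rw [← hσ'2 v (hE v hvR)]; exact hs
    · intro c hc
      simp only [Finset.mem_filter, Finset.mem_univ, true_and] at hc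
      congr 1
      apply hCloc R hR
      intro v hv
      unfold potential
      rw [hσ'2 v (hE v hv)]
      simp [hE v hv]
  -- main case: some vertex of R changes
  have main : (∃ v ∈ R, X v ≠ Y v) →
      q C σ X R * C R X = q C (sigma' X Y σ) Y R * C R Y := by
    intro hA
    set σ2 := sigma' X Y σ with hσ2
    set flip : (V → Bool) → (V → Bool) :=
      fun c v => if v ∈ R ∧ X v ≠ Y v then !(c v) else c v with hflip
    set cA : V → Bool := fun v => decide (v ∈ R ∧ X v ≠ Y v) with hcAdef
    have flipflip : ∀ c, flip (flip c) = c := by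
      intro c; funext v; by_cases h : v ∈ R ∧ X v ≠ Y v <;> simp [hflip, h]
    have flipcA : flip cA = fun _ => false := by
      funext v
      by_cases h : v ∈ R ∧ X v ≠ Y v
      · simp [hflip, hcAdef, h]
      · simp only [hflip, hcAdef, if_neg h]
        exact decide_eq_false h
    have hpot : ∀ c, ∀ v ∈ R, potential σ X c v = potential σ2 Y (flip c) v := by
      intro c v hv
      by_cases h : X v = Y v
      · have hnm : ¬ (v ∈ R ∧ X v ≠ Y v) := by simp [h]
        simp only [hflip, potential, if_neg hnm]
        rw [hσ'2 v h]
        simp [h]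
      · have hm : v ∈ R ∧ X v ≠ Y v := ⟨hv, h⟩
        simp only [hflip, potential, if_pos hm]
        rw [hσ'1 v h, (hσY v h).2]
        by_cases hcv : c v <;> simp [hcv]
    have hchoice1 : ∀ c, IsChoice σ R c → c ≠ cA → IsChoice σ2 R (flip c) := by
      intro c ⟨h1, h2⟩ hne
      constructor
      · intro v hv
        by_cases h : v ∈ R ∧ X v ≠ Y v
        · exact ⟨h.1, by rw [hσ'1 v h.2]; simp⟩
        · simp only [hflip, if_neg h] at hv
          obtain ⟨hvR, hs⟩ := h1 v hv
          have hXv : X v = Y v := by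
            by_contra hc; exact h ⟨hvR, hc⟩
          exact ⟨hvR, by rw [hσ'2 v hXv]; exact hs⟩
      · by_contra hno
        push_neg at hno
        apply hne
        funext v
        by_cases hvR : v ∈ R
        · by_cases h : X v = Y v
          · have hnm : ¬ (v ∈ R ∧ X v ≠ Y v) := by simp [h]
            have := hno v hvR
            simp only [hflip, if_neg hnm] at this
            simp [hcAdef, h, this]
          · have hm : v ∈ R ∧ X v ≠ Y v := ⟨hvR, h⟩
            have := hno v hvR
            simp only [hflip, if_pos hm] at this
            simp only [Bool.not_eq_true] at this
            have : c v = true := by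
              cases hcv : c v
              · rw [hcv] at this; simp at this
              · rfl
            simp [hcAdef, hm, this]
        · have : ¬ (c v = true) := fun hc => hvR ((h1 v hc).1)
          simp only [Bool.not_eq_true] at this
          simp [hcAdef, hvR, this]
    have hchoice2 : ∀ c, IsChoice σ2 R c → c ≠ cA → IsChoice σ R (flip c) := by
      intro c ⟨h1, h2⟩ hne
      constructor
      · intro v hv
        by_cases h : v ∈ R ∧ X v ≠ Y v
        · exact ⟨h.1, by rw [(hσY v h.2).2]; simp⟩
        · simp only [hflip, if_neg h] at hv
          obtain ⟨hvR, hs⟩ := h1 v hv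
          have hXv : X v = Y v := by
            by_contra hc; exact h ⟨hvR, hc⟩
          exact ⟨hvR, by rw [← hσ'2 v hXv]; exact hs⟩
      · by_contra hno
        push_neg at hno
        apply hne
        funext v
        by_cases hvR : v ∈ R
        · by_cases h : X v = Y v
          · have hnm : ¬ (v ∈ R ∧ X v ≠ Y v) := by simp [h]
            have := hno v hvR
            simp only [hflip, if_neg hnm] at this
            simp [hcAdef, h, this]
          · have hm : v ∈ R ∧ X v ≠ Y v := ⟨hvR, h⟩
            have := hno v hvR
            simp only [hflip, if_pos hm] at this
            simp only [Bool.not_eq_true] at this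
            have : c v = true := by
              cases hcv : c v
              · rw [hcv] at this; simp at this
              · rfl
            simp [hcAdef, hm, this]
        · have : ¬ (c v = true) := fun hc => hvR ((h1 v hc).1)
          simp only [Bool.not_eq_true] at this
          simp [hcAdef, hvR, this]
    have hne1 : ∀ c, IsChoice σ R c → flip c ≠ cA := by
      intro c hc heq
      have : c = fun _ => false := by
        rw [← flipflip c, heq, flipcA]
      obtain ⟨v, _, hv⟩ := hc.2
      rw [this] at hv; simp at hv
    have hne2 : ∀ c, IsChoice σ2 R c → flip c ≠ cA := by
      intro c hc heq
      have : c = fun _ => false := by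
        rw [← flipflip c, heq, flipcA]
      obtain ⟨v, _, hv⟩ := hc.2
      rw [this] at hv; simp at hv
    obtain ⟨v0, hv0R, hv0⟩ := hA
    have hcA1 : IsChoice σ R cA := by
      constructor
      · intro v hv
        simp only [hcAdef, decide_eq_true_eq] at hv
        exact ⟨hv.1, by rw [(hσY v hv.2).2]; simp⟩
      · exact ⟨v0, hv0R, by simp [hcAdef, hv0R, hv0]⟩
    have hcA2 : IsChoice σ2 R cA := by
      constructor
      · intro v hv
        simp only [hcAdef, decide_eq_true_eq] at hv
        exact ⟨hv.1, by rw [hσ'1 v hv.2]; simp⟩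
      · exact ⟨v0, hv0R, by simp [hcAdef, hv0R, hv0]⟩
    have hpotA1 : C R (potential σ X cA) = C R Y := by
      apply hCloc R hR
      intro v hv
      by_cases h : X v = Y v
      · have : cA v = false := by simp [hcAdef, h]
        simp [potential, this, h]
      · have : cA v = true := by simp [hcAdef, hv, h]
        simp [potential, this, (hσY v h).2]
    have hpotA2 : C R (potential σ2 Y cA) = C R X := by
      apply hCloc R hR
      intro v hv
      by_cases h : X v = Y v
      · have : cA v = false := by simp [hcAdef, h]
        simp [potential, this, h]
      · have : cA v = true := by simp [hcAdef, hv, h]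
        simp [potential, this, hσ'1 v h]
    -- the products over erased sets coincide
    have hprod :
        ∏ c ∈ (Finset.univ.filter (fun c : V → Bool => IsChoice σ R c)).erase cA,
          C R (potential σ X c) / Cstar C R
        = ∏ c ∈ (Finset.univ.filter (fun c : V → Bool => IsChoice σ2 R c)).erase cA,
          C R (potential σ2 Y c) / Cstar C R := by
      apply Finset.prod_nbij' flip flip
      · intro c hc
        simp only [Finset.mem_erase, Finset.mem_filter, Finset.mem_univ, true_and] at hc ⊢
        exact ⟨hne1 c hc.2, hchoice1 c hc.2 hc.1⟩
      · intro c hc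
        simp only [Finset.mem_erase, Finset.mem_filter, Finset.mem_univ, true_and] at hc ⊢
        exact ⟨hne2 c hc.2, hchoice2 c hc.2 hc.1⟩
      · intro c _; exact flipflip c
      · intro c _; exact flipflip c
      · intro c _
        congr 1
        exact hCloc R hR _ _ (hpot c)
    have hmemA1 : cA ∈ Finset.univ.filter (fun c : V → Bool => IsChoice σ R c) := by
      simp [hcA1]
    have hmemA2 : cA ∈ Finset.univ.filter (fun c : V → Bool => IsChoice σ2 R c) := by
      simp [hcA2]
    unfold q
    rw [← Finset.mul_prod_erase _ _ hmemA1, ← Finset.mul_prod_erase _ _ hmemA2,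
      hprod, hpotA1, hpotA2]
    ring
  constructor
  · intro _
    by_cases hE : ∀ v ∈ R, X v = Y v
    · obtain ⟨hq, hC⟩ := key_eq hE; rw [hq, hC]
    · push_neg at hE
      exact main hE
  · intro hI
    have hE : ∀ v ∈ R, X v = Y v := by
      intro v hv
      have hr : Restricted 𝒮 I v := ⟨⟨R, hR⟩, hv, hI⟩
      have h := hmap v; rw [if_pos hr] at h; exact h.symm
    obtain ⟨hq, hC⟩ := key_eq hE
    rw [hq, hC]

end DistSampling
end
end

section
/- If X and Y are valid labelings that differ at exactly one vertex, then M[X,Y] > 0, where M is the transition matrix of the distributed Metropolis chain. -/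
open scoped Classical
open Finset

noncomputable section

namespace DistSampling

variable {V L : Type*} [Fintype V] [Fintype L] [DecidableEq V] [DecidableEq L]
  [Nonempty V] [Nonempty L]

private lemma prod_pos_factor {ι : Type*} (s : Finset ι) (f : ι → ℝ)
    (h0 : ∀ i ∈ s, 0 ≤ f i) (hp : 0 < ∏ i ∈ s, f i) : ∀ i ∈ s, 0 < f i := by
  intro i hi
  rcases lt_or_eq_of_le (h0 i hi) with h | h
  · exact h
  · exfalso
    have : (∏ j ∈ s, f j) = 0 := Finset.prod_eq_zero hi h.symm
    rw [this] at hp; exact lt_irrefl 0 hp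

/-- if valid labelings X and Y differ at exactly one vertex,
then M[X,Y] > 0. -/
theorem single_vertex_transition
(b : V → L → ℝ) (p : ℝ) (𝒮 : Finset (Finset V)) (C : Finset V → (V → L) → ℝ)
    (hb : ∀ v l, 0 ≤ b v l) (hS : ∀ v, 0 < Sw b v)
    (hcard : ∀ R ∈ 𝒮, 2 ≤ R.card)
    (hC0 : ∀ R ∈ 𝒮, ∀ X : V → L, 0 ≤ C R X)
    (hCloc : ∀ R ∈ 𝒮, ∀ X Y : V → L, (∀ v ∈ R, X v = Y v) → C R X = C R Y)
    (hCstar : ∀ R ∈ 𝒮, 0 < Cstar C R)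
    (hp : 0 < p) (hp1 : p < 1)
    (hvalid : ∃ Z : V → L, 0 < weight b 𝒮 C Z)
    (X Y : V → L) (hX : 0 < weight b 𝒮 C X) (hY : 0 < weight b 𝒮 C Y)
    (hdiff : ∃ v, X v ≠ Y v ∧ ∀ u, u ≠ v → X u = Y u) :
    0 < M b p 𝒮 C X Y := by
  obtain ⟨v, hv, hoth⟩ := hdiff
  -- unpack positivity of weight Y
  have hbY : ∀ u, 0 < b u (Y u) := by
    have h1 : 0 ≤ ∏ u, b u (Y u) := Finset.prod_nonneg fun u _ => hb u (Y u)
    have h2 : 0 ≤ ∏ R ∈ 𝒮, C R Y := Finset.prod_nonneg fun R hR => hC0 R hR Y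
    have hprod : 0 < ∏ u, b u (Y u) := by
      rcases lt_or_eq_of_le h1 with h | h
      · exact h
      · exfalso; unfold weight at hY; rw [← h, zero_mul] at hY; exact lt_irrefl 0 hY
    exact fun u => prod_pos_factor _ _ (fun u _ => hb u (Y u)) hprod u (Finset.mem_univ u)
  have hCY : ∀ R ∈ 𝒮, 0 < C R Y := by
    have h1 : 0 ≤ ∏ u, b u (Y u) := Finset.prod_nonneg fun u _ => hb u (Y u)
    have hprod : 0 < ∏ R ∈ 𝒮, C R Y := by
      rcases lt_or_eq_of_le (Finset.prod_nonneg fun R hR => hC0 R hR Y) with h | h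
      · exact h
      · exfalso; unfold weight at hY; rw [← h, mul_zero] at hY; exact lt_irrefl 0 hY
    exact prod_pos_factor _ _ (fun R hR => hC0 R hR Y) hprod
  -- proposal and filter
  set σ₀ : V → Option L := fun u => if u = v then some (Y v) else none with hσ₀
  set I₀ : {R // R ∈ 𝒮} → Bool := fun _ => true with hI₀
  -- general nonnegativity facts
  have hPprop_nonneg : ∀ σ : V → Option L, 0 ≤ Pprop b p σ := by
    intro σ
    apply Finset.prod_nonneg
    intro u _
    cases hσ : σ u with
    | none => simp [hσ]; linarith
    | some l =>
      simp only [hσ, Option.elim]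
      exact div_nonneg (mul_nonneg hp.le (hb u l)) (hS u).le
  have hq_nonneg : ∀ (σ : V → Option L) (R : Finset V), R ∈ 𝒮 → 0 ≤ q C σ X R := by
    intro σ R hR
    apply Finset.prod_nonneg
    intro c _
    exact div_nonneg (hC0 R hR _) (hCstar R hR).le
  have hq_le_one : ∀ (σ : V → Option L) (R : Finset V), R ∈ 𝒮 → q C σ X R ≤ 1 := by
    intro σ R hR
    apply Finset.prod_le_one
    · intro c _; exact div_nonneg (hC0 R hR _) (hCstar R hR).le
    · intro c _
      rw [div_le_one (hCstar R hR)]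
      exact Finset.le_sup' (fun Z : V → L => C R Z) (Finset.mem_univ _)
  have hPfilter_nonneg : ∀ (σ : V → Option L) (I : {R // R ∈ 𝒮} → Bool),
      0 ≤ Pfilter C 𝒮 σ X I := by
    intro σ I
    apply Finset.prod_nonneg
    intro R _
    split
    · exact hq_nonneg σ R.val R.property
    · linarith [hq_le_one σ R.val R.property]
  -- the chosen move maps X to Y
  have hmove : MoveMapsTo 𝒮 σ₀ I₀ X Y := by
    intro u
    have hnr : ¬ Restricted 𝒮 I₀ u := by
      rintro ⟨R, -, hR⟩; simp [hI₀] at hR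
    rw [if_neg hnr]
    by_cases hu : u = v
    · subst hu; simp [hσ₀]
    · simp [hσ₀, hu]; exact (hoth u hu).symm
  -- positivity of Pprop σ₀
  have hPprop_pos : 0 < Pprop b p σ₀ := by
    apply Finset.prod_pos
    intro u _
    by_cases hu : u = v
    · subst hu
      simp only [hσ₀, if_pos rfl, Option.elim]
      exact div_pos (mul_pos hp (hbY u)) (hS u)
    · simp only [hσ₀, if_neg hu, Option.elim]
      linarith
  -- positivity of Pfilter for I₀
  have hPfilter_pos : 0 < Pfilter C 𝒮 σ₀ X I₀ := by
    apply Finset.prod_pos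
    intro R _
    rw [if_pos rfl]
    apply Finset.prod_pos
    intro c hc
    rw [Finset.mem_filter] at hc
    obtain ⟨-, hc1, u, huR, hcu⟩ := hc
    -- c is true exactly at v
    have hcv : ∀ w, c w = true → w = v := by
      intro w hw
      obtain ⟨-, hsome⟩ := hc1 w hw
      by_contra hwv
      simp [hσ₀, hwv] at hsome
    have hpot : potential σ₀ X c = Y := by
      funext w
      unfold potential
      by_cases hcw : c w = true
      · have := hcv w hcw
        subst this
        simp [hcw, hσ₀]
      · simp only [Bool.not_eq_true] at hcw
        rw [hcw, if_neg (by simp)]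
        by_cases hwv : w = v
        · exfalso
          have := hcv u hcu
          subst this; subst hwv
          rw [hcw] at hcu; exact Bool.false_ne_true hcu
        · exact hoth w hwv
    rw [hpot]
    exact div_pos (hCY R.val R.property) (hCstar R.val R.property)
  -- assemble
  unfold M
  apply Finset.sum_pos'
  · intro σ _
    apply Finset.sum_nonneg
    intro I _
    split
    · exact mul_nonneg (hPprop_nonneg σ) (hPfilter_nonneg σ I)
    · exact le_rfl
  · refine ⟨σ₀, Finset.mem_univ _, ?_⟩
    apply Finset.sum_pos'
    · intro I _
      split
      · exact mul_nonneg (hPprop_nonneg σ₀) (hPfilter_nonneg σ₀ I)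
      · exact le_rfl
    · refine ⟨I₀, Finset.mem_univ _, ?_⟩
      rw [if_pos hmove]
      exact mul_pos hPprop_pos hPfilter_pos


end DistSampling
end
end

section
/- Suppose X and Y are valid labelings connected by a sequence of valid labelings X = Z_1, Z_2, …, Z_m = Y in which consecutive labelings differ at exactly one vertex. Then the distributed Metropolis chain can move from X to Y: there exists t ≥ 1 such that M^t[X,Y] > 0, where M^t denotes the t-th matrix power of the transition matrix M indexed by labelings. -/
open scoped Classical
open Finset

noncomputable section

namespace DistSampling

variable {V L : Type*} [Fintype V] [Fintype L] [DecidableEq V] [DecidableEq L]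
  [Nonempty V] [Nonempty L]

set_option linter.unusedSectionVars false
set_option linter.unusedVariables false

/-- Auxiliary lemmas for the irreducibility proof. -/
lemma aux_C_le_Cstar (C : Finset V → (V → L) → ℝ) (R : Finset V) (X : V → L) :
    C R X ≤ Cstar C R := Finset.le_sup' _ (Finset.mem_univ X)

lemma aux_q_nonneg (C : Finset V → (V → L) → ℝ) (σ : V → Option L) (X : V → L)
    (R : Finset V) (hC0 : ∀ Z : V → L, 0 ≤ C R Z) (hCs : 0 < Cstar C R) :
    0 ≤ q C σ X R :=
  Finset.prod_nonneg fun c _ => div_nonneg (hC0 _) hCs.le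

lemma aux_q_le_one (C : Finset V → (V → L) → ℝ) (σ : V → Option L) (X : V → L)
    (R : Finset V) (hC0 : ∀ Z : V → L, 0 ≤ C R Z) (hCs : 0 < Cstar C R) :
    q C σ X R ≤ 1 :=
  Finset.prod_le_one (fun c _ => div_nonneg (hC0 _) hCs.le)
    (fun c _ => (div_le_one hCs).mpr (aux_C_le_Cstar C R _))

lemma aux_Pprop_nonneg (b : V → L → ℝ) (p : ℝ) (σ : V → Option L)
    (hb : ∀ v l, 0 ≤ b v l) (hS : ∀ v, 0 < Sw b v) (hp : 0 ≤ p) (hp1 : p ≤ 1) :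
    0 ≤ Pprop b p σ := by
  refine Finset.prod_nonneg fun v _ => ?_
  cases hσ : σ v with
  | none => simpa using by linarith
  | some l =>
    simp only [Option.elim]
    exact div_nonneg (mul_nonneg hp (hb v l)) (hS v).le

lemma aux_Pfilter_nonneg (C : Finset V → (V → L) → ℝ) (𝒮 : Finset (Finset V))
    (σ : V → Option L) (X : V → L) (I : {R // R ∈ 𝒮} → Bool)
    (hC0 : ∀ R ∈ 𝒮, ∀ Z : V → L, 0 ≤ C R Z) (hCs : ∀ R ∈ 𝒮, 0 < Cstar C R) :
    0 ≤ Pfilter C 𝒮 σ X I := by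
  refine Finset.prod_nonneg fun R _ => ?_
  have h0 := aux_q_nonneg C σ X R.val (hC0 R.val R.2) (hCs R.val R.2)
  have h1 := aux_q_le_one C σ X R.val (hC0 R.val R.2) (hCs R.val R.2)
  split <;> linarith

lemma aux_M_nonneg (b : V → L → ℝ) (p : ℝ) (𝒮 : Finset (Finset V))
    (C : Finset V → (V → L) → ℝ)
    (hb : ∀ v l, 0 ≤ b v l) (hS : ∀ v, 0 < Sw b v) (hp : 0 ≤ p) (hp1 : p ≤ 1)
    (hC0 : ∀ R ∈ 𝒮, ∀ Z : V → L, 0 ≤ C R Z) (hCs : ∀ R ∈ 𝒮, 0 < Cstar C R)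
    (X Y : V → L) : 0 ≤ M b p 𝒮 C X Y := by
  refine Finset.sum_nonneg fun σ _ => Finset.sum_nonneg fun I _ => ?_
  split
  · exact mul_nonneg (aux_Pprop_nonneg b p σ hb hS hp hp1)
      (aux_Pfilter_nonneg C 𝒮 σ X I hC0 hCs)
  · exact le_refl 0

lemma aux_pow_nonneg (A : Matrix (V → L) (V → L) ℝ)
    (hA : ∀ X Y, 0 ≤ A X Y) (t : ℕ) : ∀ X Y, 0 ≤ (A ^ t) X Y := by
  induction t with
  | zero =>
    intro X Y
    simp only [pow_zero, Matrix.one_apply]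
    split <;> norm_num
  | succ n ih =>
    intro X Y
    rw [pow_succ, Matrix.mul_apply]
    exact Finset.sum_nonneg fun W _ => mul_nonneg (ih X W) (hA W Y)

lemma aux_weight_b_pos (b : V → L → ℝ) (𝒮 : Finset (Finset V))
    (C : Finset V → (V → L) → ℝ) (X : V → L)
    (hb : ∀ v l, 0 ≤ b v l) (hX : 0 < weight b 𝒮 C X) (v : V) :
    0 < b v (X v) := by
  rcases (hb v (X v)).lt_or_eq with h | h
  · exact h
  · exfalso
    have : weight b 𝒮 C X = 0 := by
      unfold weight
      rw [Finset.prod_eq_zero (Finset.mem_univ v) h.symm, zero_mul]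
    linarith

lemma aux_weight_C_pos (b : V → L → ℝ) (𝒮 : Finset (Finset V))
    (C : Finset V → (V → L) → ℝ) (X : V → L) (R : Finset V) (hR : R ∈ 𝒮)
    (hC0 : ∀ R ∈ 𝒮, ∀ Z : V → L, 0 ≤ C R Z) (hX : 0 < weight b 𝒮 C X) :
    0 < C R X := by
  rcases (hC0 R hR X).lt_or_eq with h | h
  · exact h
  · exfalso
    have : weight b 𝒮 C X = 0 := by
      unfold weight
      rw [Finset.prod_eq_zero hR h.symm, mul_zero]
    linarith

lemma aux_Mpos_self (b : V → L → ℝ) (p : ℝ) (𝒮 : Finset (Finset V))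
    (C : Finset V → (V → L) → ℝ)
    (hb : ∀ v l, 0 ≤ b v l) (hS : ∀ v, 0 < Sw b v) (hp : 0 < p) (hp1 : p < 1)
    (hC0 : ∀ R ∈ 𝒮, ∀ Z : V → L, 0 ≤ C R Z) (hCs : ∀ R ∈ 𝒮, 0 < Cstar C R)
    (X : V → L) : 0 < M b p 𝒮 C X X := by
  classical
  set σ₀ : V → Option L := fun _ => none with hσ₀
  set I₀ : {R // R ∈ 𝒮} → Bool := fun _ => true with hI₀
  have hmaps : MoveMapsTo 𝒮 σ₀ I₀ X X := by
    intro v; split <;> simp [σ₀]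
  have hq : ∀ R : Finset V, q C σ₀ X R = 1 := by
    intro R
    unfold q
    rw [Finset.filter_eq_empty_iff.mpr, Finset.prod_empty]
    rintro c - ⟨h1, v, hv, hc⟩
    have := (h1 v hc).2
    simp [σ₀] at this
  have hterm : 0 < Pprop b p σ₀ * Pfilter C 𝒮 σ₀ X I₀ := by
    apply mul_pos
    · unfold Pprop
      exact Finset.prod_pos fun v _ => by simp [σ₀]; linarith
    · unfold Pfilter
      exact Finset.prod_pos fun R _ => by simp [I₀, hq R.val]
  unfold M
  refine Finset.sum_pos' (fun σ _ => Finset.sum_nonneg fun I _ => ?_)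
    ⟨σ₀, Finset.mem_univ _, Finset.sum_pos'
      (fun I _ => ?_) ⟨I₀, Finset.mem_univ _, by rw [if_pos hmaps]; exact hterm⟩⟩
  · split
    · exact mul_nonneg (aux_Pprop_nonneg b p σ hb hS hp.le hp1.le)
        (aux_Pfilter_nonneg C 𝒮 σ X I hC0 hCs)
    · exact le_refl 0
  · split
    · exact mul_nonneg (aux_Pprop_nonneg b p σ₀ hb hS hp.le hp1.le)
        (aux_Pfilter_nonneg C 𝒮 σ₀ X I hC0 hCs)
    · exact le_refl 0

lemma aux_Mpos_step (b : V → L → ℝ) (p : ℝ) (𝒮 : Finset (Finset V))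
    (C : Finset V → (V → L) → ℝ)
    (hb : ∀ v l, 0 ≤ b v l) (hS : ∀ v, 0 < Sw b v) (hp : 0 < p) (hp1 : p < 1)
    (hC0 : ∀ R ∈ 𝒮, ∀ Z : V → L, 0 ≤ C R Z) (hCs : ∀ R ∈ 𝒮, 0 < Cstar C R)
    (X Y : V → L) (hY : 0 < weight b 𝒮 C Y)
    (v₀ : V) (hsame : ∀ u, u ≠ v₀ → X u = Y u) :
    0 < M b p 𝒮 C X Y := by
  classical
  set σ₀ : V → Option L := fun v => if v = v₀ then some (Y v₀) else none with hσ₀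
  set I₀ : {R // R ∈ 𝒮} → Bool := fun _ => true with hI₀
  have hnr : ∀ v, ¬ Restricted 𝒮 I₀ v := by
    rintro v ⟨R, -, hR⟩; simp [I₀] at hR
  have hmaps : MoveMapsTo 𝒮 σ₀ I₀ X Y := by
    intro v
    rw [if_neg (hnr v)]
    by_cases h : v = v₀
    · subst h; simp [σ₀]
    · simp [σ₀, h, hsame v h]
  have hpot : ∀ c : V → Bool, ∀ R : Finset V, IsChoice σ₀ R c →
      potential σ₀ X c = Y := by
    rintro c R ⟨h1, w, hw, hcw⟩
    have hkey : ∀ v, c v = true → v = v₀ := by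
      intro v hv
      have := (h1 v hv).2
      by_contra hne
      simp [σ₀, hne] at this
    funext v
    unfold potential
    by_cases hcv : c v = true
    · have hv := hkey v hcv
      subst hv
      simp [hcv, σ₀]
    · simp only [Bool.not_eq_true] at hcv
      rw [hcv, if_neg (by simp)]
      by_cases h : v = v₀
      · subst h
        exact absurd (hkey w hcw ▸ hcw) (by simp [hcv])
      · exact hsame v h
  have hq : ∀ R ∈ 𝒮, 0 < q C σ₀ X R := by
    intro R hR
    unfold q
    refine Finset.prod_pos fun c hc => ?_
    rw [Finset.mem_filter] at hc
    rw [hpot c R hc.2]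
    exact div_pos (aux_weight_C_pos b 𝒮 C Y R hR hC0 hY) (hCs R hR)
  have hterm : 0 < Pprop b p σ₀ * Pfilter C 𝒮 σ₀ X I₀ := by
    apply mul_pos
    · unfold Pprop
      refine Finset.prod_pos fun v _ => ?_
      by_cases h : v = v₀
      · subst h
        simp only [σ₀, if_pos rfl, Option.elim]
        exact div_pos (mul_pos hp (aux_weight_b_pos b 𝒮 C Y hb hY v)) (hS v)
      · simp [σ₀, h]; linarith
    · unfold Pfilter
      exact Finset.prod_pos fun R _ => by simpa [I₀] using hq R.val R.2
  unfold M
  refine Finset.sum_pos' (fun σ _ => Finset.sum_nonneg fun I _ => ?_)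
    ⟨σ₀, Finset.mem_univ _, Finset.sum_pos'
      (fun I _ => ?_) ⟨I₀, Finset.mem_univ _, by rw [if_pos hmaps]; exact hterm⟩⟩
  · split
    · exact mul_nonneg (aux_Pprop_nonneg b p σ hb hS hp.le hp1.le)
        (aux_Pfilter_nonneg C 𝒮 σ X I hC0 hCs)
    · exact le_refl 0
  · split
    · exact mul_nonneg (aux_Pprop_nonneg b p σ₀ hb hS hp.le hp1.le)
        (aux_Pfilter_nonneg C 𝒮 σ₀ X I hC0 hCs)
    · exact le_refl 0

/-- if valid labelings X and Y are connected by a sequence of valid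
labelings in which consecutive labelings differ at exactly one vertex, then
M^t[X,Y] > 0 for some t ≥ 1. -/
theorem irreducible_on_connected
(b : V → L → ℝ) (p : ℝ) (𝒮 : Finset (Finset V)) (C : Finset V → (V → L) → ℝ)
    (hb : ∀ v l, 0 ≤ b v l) (hS : ∀ v, 0 < Sw b v)
    (hcard : ∀ R ∈ 𝒮, 2 ≤ R.card)
    (hC0 : ∀ R ∈ 𝒮, ∀ X : V → L, 0 ≤ C R X)
    (hCloc : ∀ R ∈ 𝒮, ∀ X Y : V → L, (∀ v ∈ R, X v = Y v) → C R X = C R Y)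
    (hCstar : ∀ R ∈ 𝒮, 0 < Cstar C R)
    (hp : 0 < p) (hp1 : p < 1)
    (hvalid : ∃ Z : V → L, 0 < weight b 𝒮 C Z)
    (X Y : V → L) (hX : 0 < weight b 𝒮 C X) (hY : 0 < weight b 𝒮 C Y)
    (m : ℕ) (hm : 1 ≤ m) (Z : Fin m → (V → L))
    (hZX : Z ⟨0, by omega⟩ = X) (hZY : Z ⟨m - 1, by omega⟩ = Y)
    (hZvalid : ∀ i, 0 < weight b 𝒮 C (Z i))
    (hstep : ∀ i : Fin m, ∀ h : (i : ℕ) + 1 < m,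
      ∃ v, Z i v ≠ Z ⟨(i : ℕ) + 1, h⟩ v ∧
        ∀ u, u ≠ v → Z i u = Z ⟨(i : ℕ) + 1, h⟩ u) :
    ∃ t : ℕ, 1 ≤ t ∧ 0 < (M b p 𝒮 C ^ t) X Y := by
  have hM0 : ∀ A B : V → L, 0 ≤ M b p 𝒮 C A B :=
    aux_M_nonneg b p 𝒮 C hb hS hp.le hp1.le hC0 hCstar
  have key : ∀ k : ℕ, ∀ hk : k < m, 0 < (M b p 𝒮 C ^ (k + 1)) X (Z ⟨k, hk⟩) := by
    intro k
    induction k with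
    | zero =>
      intro hk
      rw [show Z ⟨0, hk⟩ = X from hZX, pow_one]
      exact aux_Mpos_self b p 𝒮 C hb hS hp hp1 hC0 hCstar X
    | succ n ih =>
      intro hk
      have hn : n < m := by omega
      have h1 := ih hn
      obtain ⟨v, hne, hsame⟩ := hstep ⟨n, hn⟩ hk
      have h2 : 0 < M b p 𝒮 C (Z ⟨n, hn⟩) (Z ⟨n + 1, hk⟩) :=
        aux_Mpos_step b p 𝒮 C hb hS hp hp1 hC0 hCstar _ _ (hZvalid _) v hsame
      rw [pow_succ, Matrix.mul_apply]
      calc (0:ℝ)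
          < (M b p 𝒮 C ^ (n + 1)) X (Z ⟨n, hn⟩) *
              M b p 𝒮 C (Z ⟨n, hn⟩) (Z ⟨n + 1, hk⟩) := mul_pos h1 h2
        _ ≤ ∑ W, (M b p 𝒮 C ^ (n + 1)) X W * M b p 𝒮 C W (Z ⟨n + 1, hk⟩) :=
            Finset.single_le_sum
              (f := fun W => (M b p 𝒮 C ^ (n + 1)) X W * M b p 𝒮 C W (Z ⟨n + 1, hk⟩))
              (fun W _ => mul_nonneg (aux_pow_nonneg _ hM0 _ _ _) (hM0 _ _))
              (Finset.mem_univ (Z ⟨n, hn⟩))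
  refine ⟨m - 1 + 1, by omega, ?_⟩
  have h := key (m - 1) (by omega)
  rwa [hZY] at h

end DistSampling
end
end

section
/- (Correctness of coupling from the past.) Let Ω be a finite nonempty set, let M : Ω × Ω → ℝ be a stochastic matrix (M[x,y] ≥ 0 and Σ_y M[x,y] = 1 for every x), and let π be a probability distribution on Ω that is stationary for M, i.e., Σ_x π(x)·M[x,y] = π(y) for all y. Let (g_k)_{k≥1} be an i.i.d. sequence of random functions from Ω to Ω such that ℙ(g_1(x) = y) = M[x,y] for all x, y ∈ Ω. Define N := inf{T ≥ 1 : g_1 ∘ g_2 ∘ ⋯ ∘ g_T is a constant function} (with inf ∅ = ∞) and assume ℙ(N < ∞) = 1. Fix any x_0 ∈ Ω and let W := (g_1 ∘ ⋯ ∘ g_N)(x_0) on the event {N < ∞}. Then ℙ(W = y) = π(y) for every y ∈ Ω. -/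
open MeasureTheory ProbabilityTheory

/-- `compBwd G T = g_1 ∘ g_2 ∘ ⋯ ∘ g_T`, where `g_k = G (k - 1)`. -/
def compBwd {Ω : Type*} (G : ℕ → Ω → Ω) : ℕ → Ω → Ω
  | 0 => id
  | T + 1 => compBwd G T ∘ G T

/-- A function is constant if it takes the same value everywhere. -/
def IsConstFn {Ω : Type*} (g : Ω → Ω) : Prop := ∃ c, ∀ x, g x = c

/-- The (backward) coalescence time `N = inf {T ≥ 1 : g_1 ∘ ⋯ ∘ g_T constant}`
(a natural number; `Nat.sInf ∅ = 0`). -/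
noncomputable def coalTime {Ω Θ : Type*} (G : ℕ → Θ → Ω → Ω) (θ : Θ) : ℕ :=
  sInf {T : ℕ | 1 ≤ T ∧ IsConstFn (compBwd (fun k => G k θ) T)}

/-- If `S ≤ T` then `compBwd G T` factors through `compBwd G S`. -/
lemma compBwd_factor {Ω : Type*} (G : ℕ → Ω → Ω) {S T : ℕ} (h : S ≤ T) :
    ∃ f : Ω → Ω, compBwd G T = compBwd G S ∘ f := by
  induction T, h using Nat.le_induction with
  | base => exact ⟨id, rfl⟩
  | succ T hST ih =>
    obtain ⟨f, hf⟩ := ih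
    exact ⟨f ∘ G T, by simp [compBwd, hf, Function.comp_assoc]⟩

/-- Once the backward composition is constant, it stays constant with the
same value. -/
lemma compBwd_const_stab {Ω : Type*} (G : ℕ → Ω → Ω) {S T : ℕ} (h : S ≤ T)
    (hc : IsConstFn (compBwd G S)) :
    ∀ x x', compBwd G T x = compBwd G S x' := by
  obtain ⟨c, hc⟩ := hc
  obtain ⟨f, hf⟩ := compBwd_factor G h
  intro x x'
  rw [hf]
  simp [Function.comp, hc]

/-- `compBwd G T` only depends on `G k` for `k < T`. -/
lemma compBwd_congr {Ω : Type*} {G G' : ℕ → Ω → Ω} :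
    ∀ {T : ℕ}, (∀ k < T, G k = G' k) → compBwd G T = compBwd G' T
  | 0, _ => rfl
  | T + 1, h => by
    have h1 : compBwd G T = compBwd G' T :=
      compBwd_congr (fun k hk => h k (hk.trans (Nat.lt_succ_self T)))
    simp [compBwd, h1, h T (Nat.lt_succ_self T)]

/-- correctness of coupling from the past, Propp–Wilson:
if `M` is a stochastic matrix with stationary distribution `π`, `(g_k)` is an
i.i.d. sequence of random functions with `ℙ(g_1(x) = y) = M[x,y]`, and the
coalescence time `N` is a.s. finite, then `W = (g_1 ∘ ⋯ ∘ g_N)(x₀)` is an exact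
sample from `π`. -/
theorem cftp_correct
    {Ω : Type*} [Fintype Ω] [Nonempty Ω] [DecidableEq Ω]
    {Θ : Type*} [MeasurableSpace Θ] (μ : Measure Θ) [IsProbabilityMeasure μ]
    (M : Ω → Ω → ℝ) (hMnonneg : ∀ x y, 0 ≤ M x y) (hMrow : ∀ x, ∑ y, M x y = 1)
    (π : Ω → ℝ) (hπnonneg : ∀ x, 0 ≤ π x) (hπsum : ∑ x, π x = 1)
    (hπstat : ∀ y, ∑ x, π x * M x y = π y)
    (G : ℕ → Θ → Ω → Ω)
    (hmeas : ∀ k, @Measurable Θ (Ω → Ω) _ ⊤ (G k))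
    (hindep : iIndepFun (m := fun _ : ℕ => (⊤ : MeasurableSpace (Ω → Ω))) G μ)
    (hident : ∀ i j : ℕ, @IdentDistrib Θ Θ (Ω → Ω) _ _ ⊤ (G i) (G j) μ μ)
    (hrep : ∀ k : ℕ, ∀ x y : Ω, (μ {θ | G k θ x = y}).toReal = M x y)
    (hfin : μ {θ | ∃ T : ℕ, 1 ≤ T ∧ IsConstFn (compBwd (fun k => G k θ) T)} = 1)
    (x₀ : Ω) :
    ∀ y : Ω,
      (μ {θ | compBwd (fun k => G k θ) (coalTime G θ) x₀ = y}).toReal = π y := by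
  intro y
  letI : MeasurableSpace (Ω → Ω) := ⊤
  haveI : MeasurableSingletonClass (Ω → Ω) :=
    ⟨fun _ => MeasurableSpace.measurableSet_top⟩
  -- measurability of the backward compositions
  have measF : ∀ T : ℕ, Measurable (fun θ => compBwd (fun k => G k θ) T) := by
    intro T
    induction T with
    | zero => exact measurable_const
    | succ T ih =>
      have hrw : (fun θ => compBwd (fun k => G k θ) (T + 1))
          = (fun p : (Ω → Ω) × (Ω → Ω) => p.1 ∘ p.2)
            ∘ (fun θ => (compBwd (fun k => G k θ) T, G T θ)) := rfl
      rw [hrw]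
      exact (measurable_of_countable _).comp (ih.prodMk (hmeas T))
  -- independence of `F_T` and `G T`
  have indepFT : ∀ T : ℕ,
      IndepFun (fun θ => compBwd (fun k => G k θ) T) (G T) μ := by
    intro T
    have h1 : IndepFun
        (fun θ (i : Finset.range T) => G i θ)
        (fun θ (i : ({T} : Finset ℕ)) => G i θ) μ :=
      hindep.indepFun_finset _ _
        (by simp [Finset.disjoint_left]; omega) hmeas
    have h2 := h1.comp
      (φ := fun t : Finset.range T → (Ω → Ω) =>
        compBwd (fun k =>
          if h : k ∈ Finset.range T then t ⟨k, h⟩ else id) T)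
      (ψ := fun t : ({T} : Finset ℕ) → (Ω → Ω) => t ⟨T, by simp⟩)
      (measurable_of_countable _) (measurable_of_countable _)
    have hΦ : (fun t : Finset.range T → (Ω → Ω) =>
          compBwd (fun k =>
            if h : k ∈ Finset.range T then t ⟨k, h⟩ else id) T)
        ∘ (fun θ (i : Finset.range T) => G i θ)
        = fun θ => compBwd (fun k => G k θ) T := by
      funext θ
      exact (compBwd_congr (fun k hk => by
        simp [Finset.mem_range.mpr hk])).symm
    rw [hΦ] at h2
    exact h2
  -- the pointwise laws
  set ν : ℕ → Ω → ℝ :=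
    fun T x => (μ {θ | compBwd (fun k => G k θ) T x = y}).toReal with hν
  have hν0 : ∀ x, ν 0 x = if x = y then 1 else 0 := by
    intro x
    by_cases h : x = y <;>
      simp [hν, compBwd, h, Set.setOf_true, Set.setOf_false, measure_univ]
  have hrec : ∀ T (x : Ω), ν (T + 1) x = ∑ z, M x z * ν T z := by
    intro T x
    have hdecomp : {θ | compBwd (fun k => G k θ) (T + 1) x = y}
        = ⋃ z ∈ (Finset.univ : Finset Ω),
            ({θ | G T θ x = z} ∩ {θ | compBwd (fun k => G k θ) T z = y}) := by
      ext θ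
      simp only [Set.mem_setOf_eq, Set.mem_iUnion, Set.mem_inter_iff,
        Finset.mem_univ, exists_true_left, exists_prop, true_and]
      constructor
      · intro h
        exact ⟨G T θ x, rfl, h⟩
      · rintro ⟨z, hz, h⟩
        show compBwd (fun k => G k θ) T (G T θ x) = y
        rw [hz]; exact h
    have hdisj : (↑(Finset.univ : Finset Ω) : Set Ω).PairwiseDisjoint
        (fun z => {θ | G T θ x = z} ∩ {θ | compBwd (fun k => G k θ) T z = y}) := by
      intro a _ b _ hab
      refine Set.disjoint_left.2 ?_
      rintro θ ⟨h1, _⟩ ⟨h2, _⟩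
      exact hab (h1.symm.trans h2)
    have hmeasZ : ∀ z ∈ (Finset.univ : Finset Ω),
        MeasurableSet ({θ | G T θ x = z} ∩ {θ | compBwd (fun k => G k θ) T z = y}) := by
      intro z _
      exact MeasurableSet.inter
        ((hmeas T) (MeasurableSpace.measurableSet_top (s := {g : Ω → Ω | g x = z})))
        ((measF T) (MeasurableSpace.measurableSet_top (s := {g : Ω → Ω | g z = y})))
    have hmul : ∀ z : Ω,
        μ ({θ | G T θ x = z} ∩ {θ | compBwd (fun k => G k θ) T z = y})
          = μ {θ | G T θ x = z} * μ {θ | compBwd (fun k => G k θ) T z = y} := by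
      intro z
      have := (indepFT T).symm.measure_inter_preimage_eq_mul
        ({g : Ω → Ω | g x = z}) ({g : Ω → Ω | g z = y})
        MeasurableSpace.measurableSet_top MeasurableSpace.measurableSet_top
      simpa [Set.preimage_setOf_eq] using this
    calc ν (T + 1) x
        = (∑ z, μ ({θ | G T θ x = z}
            ∩ {θ | compBwd (fun k => G k θ) T z = y})).toReal := by
          rw [hν]
          simp only
          rw [hdecomp, measure_biUnion_finset hdisj hmeasZ]
      _ = ∑ z, (μ {θ | G T θ x = z}).toReal
            * (μ {θ | compBwd (fun k => G k θ) T z = y}).toReal := by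
          rw [ENNReal.toReal_sum (fun z _ => measure_ne_top μ _)]
          exact Finset.sum_congr rfl fun z _ => by
            rw [hmul z, ENNReal.toReal_mul]
      _ = ∑ z, M x z * ν T z := by
          exact Finset.sum_congr rfl fun z _ => by rw [hrep T x z]
  have hstat : ∀ T, ∑ x, π x * ν T x = π y := by
    intro T
    induction T with
    | zero =>
      simp only [hν0, mul_ite, mul_one, mul_zero]
      simp [Finset.sum_ite_eq']
    | succ T ih =>
      calc ∑ x, π x * ν (T + 1) x
          = ∑ x, ∑ z, π x * (M x z * ν T z) := by
            simp [hrec, Finset.mul_sum]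
        _ = ∑ z, (∑ x, π x * M x z) * ν T z := by
            rw [Finset.sum_comm]
            exact Finset.sum_congr rfl fun z _ => by
              rw [Finset.sum_mul]
              exact Finset.sum_congr rfl fun x _ => by ring
        _ = ∑ z, π z * ν T z := by simp [hπstat]
        _ = π y := ih
  -- coalescence events
  set C : ℕ → Set Θ := fun T => {θ | IsConstFn (compBwd (fun k => G k θ) T)}
    with hC
  have measC : ∀ T, MeasurableSet (C T) := by
    intro T
    have : C T = (fun θ => compBwd (fun k => G k θ) T) ⁻¹' {g | IsConstFn g} := rfl
    rw [this]
    exact (measF T) MeasurableSpace.measurableSet_top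
  have monoC : Monotone (fun n : ℕ => C (n + 1)) := by
    intro a b hab θ hθ
    obtain ⟨f, hf⟩ := compBwd_factor (fun k => G k θ)
      (Nat.succ_le_succ hab)
    obtain ⟨c, hc⟩ := hθ
    exact ⟨c, fun x => by rw [hf]; simp [Function.comp, hc]⟩
  have hUnion : (⋃ n, C (n + 1))
      = {θ | ∃ T : ℕ, 1 ≤ T ∧ IsConstFn (compBwd (fun k => G k θ) T)} := by
    ext θ
    simp only [Set.mem_iUnion, hC, Set.mem_setOf_eq]
    constructor
    · rintro ⟨n, hn⟩
      exact ⟨n + 1, Nat.succ_le_succ (Nat.zero_le n), hn⟩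
    · rintro ⟨T, hT1, hT2⟩
      obtain ⟨n, rfl⟩ := Nat.exists_eq_add_of_le hT1
      exact ⟨n, by simpa [Nat.add_comm] using hT2⟩
  have htend : Filter.Tendsto (fun n => μ (C (n + 1))) Filter.atTop (nhds 1) := by
    have h := tendsto_measure_iUnion_atTop (μ := μ) monoC
    rw [hUnion, hfin] at h
    exact h
  -- the target event
  set E : Set Θ := {θ | compBwd (fun k => G k θ) (coalTime G θ) x₀ = y} with hE
  -- on `C T`, the CFTP value agrees with `F_T x` for every `x`
  have hagree : ∀ T : ℕ, 1 ≤ T → ∀ x : Ω,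
      E ∩ C T = {θ | compBwd (fun k => G k θ) T x = y} ∩ C T := by
    intro T hT x
    ext θ
    simp only [Set.mem_inter_iff, hE, hC, Set.mem_setOf_eq]
    constructor
    · rintro ⟨h1, h2⟩
      refine ⟨?_, h2⟩
      have hmem : coalTime G θ ∈
          {S : ℕ | 1 ≤ S ∧ IsConstFn (compBwd (fun k => G k θ) S)} :=
        Nat.sInf_mem ⟨T, hT, h2⟩
      have hle : coalTime G θ ≤ T := Nat.sInf_le ⟨hT, h2⟩
      rw [compBwd_const_stab _ hle hmem.2 x x₀]
      exact h1
    · rintro ⟨h1, h2⟩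
      refine ⟨?_, h2⟩
      have hmem : coalTime G θ ∈
          {S : ℕ | 1 ≤ S ∧ IsConstFn (compBwd (fun k => G k θ) S)} :=
        Nat.sInf_mem ⟨T, hT, h2⟩
      have hle : coalTime G θ ≤ T := Nat.sInf_le ⟨hT, h2⟩
      rw [← compBwd_const_stab _ hle hmem.2 x x₀]
      exact h1
  -- the approximation bound
  have habs : ∀ T : ℕ, 1 ≤ T → ∀ x : Ω,
      |(μ E).toReal - ν T x| ≤ (μ (C T)ᶜ).toReal := by
    intro T hT x
    set B : Set Θ := {θ | compBwd (fun k => G k θ) T x = y} with hB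
    have key : ∀ A A' : Set Θ, A ∩ C T = A' ∩ C T →
        (μ A).toReal ≤ (μ A').toReal + (μ (C T)ᶜ).toReal := by
      intro A A' hAA'
      have h1 : μ A ≤ μ A' + μ (C T)ᶜ := by
        calc μ A ≤ μ ((A ∩ C T) ∪ (C T)ᶜ) := by
              apply measure_mono
              intro θ hθ
              by_cases h : θ ∈ C T
              · exact Or.inl ⟨hθ, h⟩
              · exact Or.inr h
          _ ≤ μ (A ∩ C T) + μ (C T)ᶜ := measure_union_le _ _
          _ ≤ μ A' + μ (C T)ᶜ := by
              rw [hAA']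
              exact add_le_add (measure_mono Set.inter_subset_left) le_rfl
      calc (μ A).toReal ≤ (μ A' + μ (C T)ᶜ).toReal :=
            ENNReal.toReal_mono
              (ENNReal.add_ne_top.2 ⟨measure_ne_top μ _, measure_ne_top μ _⟩) h1
        _ = (μ A').toReal + (μ (C T)ᶜ).toReal :=
            ENNReal.toReal_add (measure_ne_top μ _) (measure_ne_top μ _)
    have h1 := key E B (hagree T hT x)
    have h2 := key B E (hagree T hT x).symm
    rw [abs_sub_le_iff]
    constructor
    · linarith [h1]
    · linarith [h2]
  -- conclude
  have hbound : ∀ n : ℕ,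
      |(μ E).toReal - π y| ≤ (μ (C (n + 1))ᶜ).toReal := by
    intro n
    have h1 : (μ E).toReal - π y
        = ∑ x, π x * ((μ E).toReal - ν (n + 1) x) := by
      have : ∑ x, π x * ((μ E).toReal - ν (n + 1) x)
          = (∑ x, π x) * (μ E).toReal - ∑ x, π x * ν (n + 1) x := by
        rw [Finset.sum_mul, ← Finset.sum_sub_distrib]
        exact Finset.sum_congr rfl fun x _ => by ring
      rw [this, hπsum, hstat (n + 1), one_mul]
    rw [h1]
    calc |∑ x, π x * ((μ E).toReal - ν (n + 1) x)|
        ≤ ∑ x, |π x * ((μ E).toReal - ν (n + 1) x)| :=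
          Finset.abs_sum_le_sum_abs _ _
      _ ≤ ∑ x, π x * (μ (C (n + 1))ᶜ).toReal := by
          apply Finset.sum_le_sum
          intro x _
          rw [abs_mul, abs_of_nonneg (hπnonneg x)]
          exact mul_le_mul_of_nonneg_left
            (habs (n + 1) (Nat.succ_le_succ (Nat.zero_le n)) x) (hπnonneg x)
      _ = (μ (C (n + 1))ᶜ).toReal := by
          rw [← Finset.sum_mul, hπsum, one_mul]
  have htend0 : Filter.Tendsto (fun n => (μ (C (n + 1))ᶜ).toReal)
      Filter.atTop (nhds 0) := by
    have hcompl : ∀ n : ℕ, (μ (C (n + 1))ᶜ).toReal = 1 - (μ (C (n + 1))).toReal := by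
      intro n
      rw [prob_compl_eq_one_sub (measC (n + 1)),
        ENNReal.toReal_sub_of_le prob_le_one ENNReal.one_ne_top,
        ENNReal.toReal_one]
    simp only [hcompl]
    have htoReal : Filter.Tendsto (fun n => (μ (C (n + 1))).toReal)
        Filter.atTop (nhds 1) := by
      have := (ENNReal.tendsto_toReal (a := 1) ENNReal.one_ne_top).comp htend
      exact this
    have := htoReal.const_sub 1
    simpa using this
  have hle0 : |(μ E).toReal - π y| ≤ 0 :=
    ge_of_tendsto' htend0 hbound
  have := abs_nonpos_iff.1 hle0
  linarith [sub_eq_zero.1 this]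
end

section
/- Let Δ ≥ 1 be a natural number and let λ, p, α be real numbers with λ > 0, p > 0, α > 0, Δ·λ ≤ α, and α·(1+p) ≤ 1. Then (1/(1+λ))·(1 − Δ·p·λ/(1+λ)) − Δ·λ/(1+λ) ≥ (1 − α·(1+p))/(1+α). Moreover, if α·(1+p) < 1, the left-hand side is strictly positive. -/
/-- the inequality at the core of the hardcore-model theorem:
for Δ ≥ 1, λ, p, α > 0 with Δ·λ ≤ α and α·(1+p) ≤ 1,
(1/(1+λ))·(1 − Δ·p·λ/(1+λ)) − Δ·λ/(1+λ) ≥ (1 − α·(1+p))/(1+α),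
and the left-hand side is strictly positive when α·(1+p) < 1. -/
theorem hardcore_inequality
    (Δ : ℕ) (hΔ : 1 ≤ Δ) (lam p α : ℝ)
    (hlam : 0 < lam) (hp : 0 < p) (hα : 0 < α)
    (hfug : (Δ : ℝ) * lam ≤ α) (hsmall : α * (1 + p) ≤ 1) :
    (1 / (1 + lam)) * (1 - (Δ : ℝ) * p * lam / (1 + lam)) - (Δ : ℝ) * lam / (1 + lam)
      ≥ (1 - α * (1 + p)) / (1 + α) ∧
    (α * (1 + p) < 1 →
      0 < (1 / (1 + lam)) * (1 - (Δ : ℝ) * p * lam / (1 + lam))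
            - (Δ : ℝ) * lam / (1 + lam)) := by
  have hΔ1 : (1:ℝ) ≤ (Δ:ℝ) := by exact_mod_cast hΔ
  have ht : 0 < (Δ:ℝ) * lam := by positivity
  have hla : lam ≤ α := le_trans (by nlinarith) hfug
  have h1 : (0:ℝ) < 1 + lam := by linarith
  have h2 : (0:ℝ) < 1 + α := by linarith
  have key : (1 / (1 + lam)) * (1 - (Δ : ℝ) * p * lam / (1 + lam)) - (Δ : ℝ) * lam / (1 + lam)
      ≥ (1 - α * (1 + p)) / (1 + α) := by
    have hsq : (0:ℝ) < (1 + lam)^2 := by positivity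
    have expand : (1 / (1 + lam)) * (1 - (Δ : ℝ) * p * lam / (1 + lam)) - (Δ : ℝ) * lam / (1 + lam)
        = ((1 + lam) - (Δ:ℝ)*lam*p - (Δ:ℝ)*lam*(1+lam)) / (1 + lam)^2 := by
      field_simp
    rw [expand, ge_iff_le, div_le_div_iff₀ h2 hsq]
    have hN : (1 + lam) * (1 - α * (1 + p)) ≤ (1 + lam) - (Δ:ℝ)*lam*p - (Δ:ℝ)*lam*(1+lam) := by
      nlinarith [mul_nonneg (sub_nonneg.2 hfug) hp.le,
        mul_nonneg (sub_nonneg.2 hfug) h1.le,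
        mul_nonneg (mul_nonneg hα.le hp.le) hlam.le]
    have hN0 : 0 ≤ (1 + lam) * (1 - α * (1 + p)) :=
      mul_nonneg h1.le (by linarith)
    calc (1 - α * (1 + p)) * (1 + lam) ^ 2
        = ((1 + lam) * (1 - α * (1 + p))) * (1 + lam) := by ring
      _ ≤ ((1 + lam) * (1 - α * (1 + p))) * (1 + α) := by
          exact mul_le_mul_of_nonneg_left (by linarith) hN0
      _ ≤ ((1 + lam) - (Δ:ℝ)*lam*p - (Δ:ℝ)*lam*(1+lam)) * (1 + α) :=
          mul_le_mul_of_nonneg_right hN h2.le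
  refine ⟨key, fun hlt => lt_of_lt_of_le ?_ key⟩
  exact div_pos (by linarith) h2
end

section
/- Let α, D, p, λ be real numbers with α > 1, D ≥ 1, 0 ≤ p ≤ α − 1, and λ ≥ α·D. Then (λ/(1+λ))·(1 − D·p/(1+λ)) − D/(1+λ) ≥ (α − p − 1)/(1+α). Moreover, if p < α − 1, the left-hand side is strictly positive. -/
/-- the inequality at the core of the weighted-dominating-set
theorem: for α > 1, D ≥ 1, 0 ≤ p ≤ α − 1 and λ ≥ α·D,
(λ/(1+λ))·(1 − D·p/(1+λ)) − D/(1+λ) ≥ (α − p − 1)/(1+α),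
and the left-hand side is strictly positive when p < α − 1. -/
theorem dominating_set_inequality
    (α D p lam : ℝ) (hα : 1 < α) (hD : 1 ≤ D)
    (hp0 : 0 ≤ p) (hp : p ≤ α - 1) (hlam : α * D ≤ lam) :
    (lam / (1 + lam)) * (1 - D * p / (1 + lam)) - D / (1 + lam)
      ≥ (α - p - 1) / (1 + α) ∧
    (p < α - 1 →
      0 < (lam / (1 + lam)) * (1 - D * p / (1 + lam)) - D / (1 + lam)) := by
  have hl1 : (1:ℝ) < lam := by nlinarith
  have h1 : (0:ℝ) < 1 + lam := by linarith
  have h2 : (0:ℝ) < 1 + α := by linarith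
  have hs : (0:ℝ) ≤ lam - α * D := by linarith
  have hq : (0:ℝ) ≤ α - 1 - p := by linarith
  have hD1 : (0:ℝ) ≤ D - 1 := by linarith
  have hu : (0:ℝ) ≤ 1 + α * D := by nlinarith
  have key : (lam / (1 + lam)) * (1 - D * p / (1 + lam)) - D / (1 + lam)
      = (lam * (1 + lam) - lam * (D * p) - D * (1 + lam)) / (1 + lam) ^ 2 := by
    field_simp
  have main : (lam / (1 + lam)) * (1 - D * p / (1 + lam)) - D / (1 + lam)
      ≥ (α - p - 1) / (1 + α) := by
    rw [key, ge_iff_le, div_le_div_iff₀ h2 (by positivity)]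
    nlinarith [mul_nonneg (mul_nonneg hq hu) hD1,
      mul_nonneg (mul_nonneg hp0 (le_of_lt (lt_trans one_pos hα))) (by linarith : (0:ℝ) ≤ D),
      mul_nonneg (mul_nonneg hs hD1) (by linarith : (0:ℝ) ≤ 3*α - 1),
      mul_nonneg hs (by linarith : (0:ℝ) ≤ 2*α + 2),
      mul_nonneg (mul_nonneg (mul_nonneg hs (by linarith : (0:ℝ) ≤ D)) hp0) (by linarith : (0:ℝ) ≤ α - 1),
      mul_nonneg hs hp0,
      sq_nonneg (lam - α * D),
      mul_nonneg hp0 (sq_nonneg (lam - α * D)),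
      mul_nonneg (mul_nonneg hp0 (by linarith : (0:ℝ) ≤ D)) (by linarith : (0:ℝ) ≤ 1 + α)]
  refine ⟨main, fun hlt => lt_of_lt_of_le ?_ main⟩
  exact div_pos (by linarith) h2
end
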